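/- Under the graph error model with independent measurement errors, edge unbiasedness λ = |E^c|·α = |E|·β, and additionally α, β < 1/2, define ξ_ij = (Y_ij − α)/σ for {i,j} ∈ E^c and ξ_ij = (Y_ij − (1−β))/σ for {i,j} ∈ E, where σ² = α(1−α)|E^c| + β(1−β)|E|, and set ε = 1/(2σ). Then ((1 − e^{−ε²/4})/40) · Σ_{{i,j}∈V^(2)} E[ξ_ij² · 1{|ξ_ij| > ε}] − Σ_{{i,j}∈V^(2)} (E[ξ_ij²])² ≥ (2 − (α+β))^{−2} · [ (1−α)² ( e^{−ε²/4}/(640·α|E^c|) − 1/|E^c| ) + (1−β)² ( e^{−ε²/4}/(640·α|E^c|) − 1/|E| ) ]. -/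

import Mathlib

open MeasureTheory ProbabilityTheory Real

/-- The Skellam distribution: law of `X - Y` for `X, Y` independent Poisson random
variables with rates `l1` and `l2`. -/
noncomputable def skellamMeasure (l1 l2 : ℝ) : Measure ℤ :=
  ((poissonMeasure l1.toNNReal).prod (poissonMeasure l2.toNNReal)).map
    (fun p => (p.1 : ℤ) - (p.2 : ℤ))

/-- Kolmogorov–Smirnov distance between two real random variables on `Ω`. -/
noncomputable def dKS {Ω : Type*} [MeasurableSpace Ω] (μ : Measure Ω) (X Z : Ω → ℝ) : ℝ :=
  ⨆ x : ℝ, |(μ {ω | X ω ≤ x}).toReal - (μ {ω | Z ω ≤ x}).toReal|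

/-- Kolmogorov–Smirnov distance between two distributions on `ℤ`. -/
noncomputable def dKSZ (μ1 μ2 : Measure ℤ) : ℝ :=
  ⨆ x : ℝ, |(μ1 {k : ℤ | (k : ℝ) ≤ x}).toReal - (μ2 {k : ℤ | (k : ℝ) ≤ x}).toReal|

/-- Kolmogorov–Smirnov distance between two distributions on `ℝ`. -/
noncomputable def dKSR (μ1 μ2 : Measure ℝ) : ℝ :=
  ⨆ x : ℝ, |(μ1 {y : ℝ | y ≤ x}).toReal - (μ2 {y : ℝ | y ≤ x}).toReal|

/-- Modified Bessel function of the first kind, of integer order `k`. -/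
noncomputable def besselI (k : ℤ) (z : ℝ) : ℝ :=
  ∑' j : ℕ, (z / 2) ^ (2 * j + k.natAbs) /
    ((Nat.factorial j : ℝ) * (Nat.factorial (j + k.natAbs) : ℝ))


set_option maxHeartbeats 2000000

private lemma twoval' {Ω : Type*} [MeasurableSpace Ω] (μ : Measure Ω) [IsProbabilityMeasure μ]
    (p : Ω → Prop) [DecidablePred p] (hS : MeasurableSet {ω | p ω}) (a b : ℝ) :
    ∫ ω, (if p ω then a else b) ∂μ
      = a * (μ {ω | p ω}).toReal + b * (1 - (μ {ω | p ω}).toReal) := by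
  have h1 : (fun ω => if p ω then a else b)
      = fun ω => Set.indicator {ω | p ω} (fun _ => a) ω
          + Set.indicator {ω | p ω}ᶜ (fun _ => b) ω := by
    funext ω; by_cases h : p ω <;> simp [h]
  rw [h1, integral_add ((integrable_const a).indicator hS)
    ((integrable_const b).indicator hS.compl), integral_indicator_const _ hS,
    integral_indicator_const _ hS.compl, measureReal_def, measureReal_def,
    prob_compl_eq_one_sub hS]
  rw [ENNReal.toReal_sub_of_le prob_le_one (by simp)]
  simp [mul_comm]

private lemma keyalg' (α β m n σ ε E : ℝ) (hα : 0 < α) (hα2 : α < 1/2) (hβ : 0 < β)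
    (hβ2 : β < 1/2) (hm : 1 ≤ m) (hn : 1 ≤ n) (hσ : 0 < σ)
    (hσ2 : σ^2 = α*(1-α)*m + β*(1-β)*n) (hlam : m*α = n*β)
    (hε : ε = 1/(2*σ)) (hE : E = Real.exp (-(ε^2)/4)) :
    ((1-E)/40) * (m*(α*((1-α)/σ)^2) + n*(β*((1-β)/σ)^2))
      - (m*(α*(1-α)/σ^2)^2 + n*(β*(1-β)/σ^2)^2)
    ≥ (2-(α+β))⁻¹^2 * ((1-α)^2*(E/(640*(α*m)) - 1/m)
        + (1-β)^2*(E/(640*(α*m)) - 1/n)) := by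
  have hm0 : (0:ℝ) < m := by linarith
  have hn0 : (0:ℝ) < n := by linarith
  have hβn : β = α*m/n := by field_simp; linarith [hlam]
  subst hβn
  have hσne : σ ≠ 0 := ne_of_gt hσ
  have hL : 0 < α*m := by positivity
  have hεpos : 0 < ε := by rw [hε]; positivity
  have hεσ : 2*ε*σ = 1 := by rw [hε]; field_simp
  have hE0 : 0 < E := by rw [hE]; positivity
  have key : E*ε^2 ≤ 4*(1-E) := by
    have h1 : 1 + ε^2/4 ≤ Real.exp (ε^2/4) := by linarith [Real.add_one_le_exp (ε^2/4)]
    have h2 : E * Real.exp (ε^2/4) = 1 := by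
      rw [hE, ← Real.exp_add]; ring_nf; exact Real.exp_zero
    nlinarith [hE0]
  have h3 : 2 - (α + α*m/n) = σ^2/(α*m) := by
    field_simp
    field_simp at hσ2
    nlinarith [hσ2]
  have hinv : (2 - (α + α*m/n))⁻¹ = α*m/σ^2 := by
    rw [h3, inv_div]
  rw [hinv]
  have heq : ((1-E)/40) * (m*(α*((1-α)/σ)^2) + n*(α*m/n*((1-α*m/n)/σ)^2))
      - (m*(α*(1-α)/σ^2)^2 + n*(α*m/n*(1-α*m/n)/σ^2)^2)
      - (α*m/σ^2)^2 * ((1-α)^2*(E/(640*(α*m)) - 1/m)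
        + (1-α*m/n)^2*(E/(640*(α*m)) - 1/n))
      = (α*m)*((1-α)^2+(1-α*m/n)^2)/σ^4 * ((1-E)/40*σ^2 - E/640) := by
    field_simp
    ring
  have hfac : 0 ≤ (1-E)/40*σ^2 - E/640 := by
    nlinarith [key, sq_nonneg σ, hεσ, mul_pos hεpos hσ, sq_nonneg (ε*σ)]
  nlinarith [heq, mul_nonneg
    (by positivity : (0:ℝ) ≤ (α*m)*((1-α)^2+(1-α*m/n)^2)/σ^4) hfac]

/-- Under the graph error model with independent errors, edge
unbiasedness, and `α, β < 1/2`, the lower-bound quantity from Stein's method for the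
normal is bounded below as stated. -/
theorem stmt_10 {Ω V : Type*} [MeasurableSpace Ω] (μ : Measure Ω) [IsProbabilityMeasure μ]
    [Fintype V] [DecidableEq V]
    (G : SimpleGraph V) [DecidableRel G.Adj]
    (hE : 1 ≤ G.edgeFinset.card) (hEc : 1 ≤ Gᶜ.edgeFinset.card)
    (Y : Sym2 V → Ω → ℤ)
    (hmeas : ∀ e, Measurable (Y e))
    (h01 : ∀ e ω, Y e ω = 0 ∨ Y e ω = 1)
    (hindep : iIndepFun
      (fun e : {e : Sym2 V // ¬ e.IsDiag} => Y e.1) μ)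
    (α β : ℝ) (hα : α ∈ Set.Ioo (0 : ℝ) 1) (hβ : β ∈ Set.Ioo (0 : ℝ) 1)
    (hα2 : α < 1 / 2) (hβ2 : β < 1 / 2)
    (hYα : ∀ e ∈ Gᶜ.edgeFinset, (μ {ω | Y e ω = 1}).toReal = α)
    (hYβ : ∀ e ∈ G.edgeFinset, (μ {ω | Y e ω = 1}).toReal = 1 - β)
    (lam : ℝ)
    (hlam1 : lam = (Gᶜ.edgeFinset.card : ℝ) * α)
    (hlam2 : lam = (G.edgeFinset.card : ℝ) * β)
    (σ : ℝ)
    (hσ : σ = Real.sqrt (α * (1 - α) * (Gᶜ.edgeFinset.card : ℝ)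
      + β * (1 - β) * (G.edgeFinset.card : ℝ)))
    (ξ : Sym2 V → Ω → ℝ)
    (hξc : ∀ e ∈ Gᶜ.edgeFinset, ∀ ω, ξ e ω = ((Y e ω : ℝ) - α) / σ)
    (hξe : ∀ e ∈ G.edgeFinset, ∀ ω, ξ e ω = ((Y e ω : ℝ) - (1 - β)) / σ)
    (ε : ℝ) (hε : ε = 1 / (2 * σ)) :
    ((1 - Real.exp (-(ε ^ 2) / 4)) / 40) *
        ((∑ e ∈ Gᶜ.edgeFinset, ∫ ω, (if ε < |ξ e ω| then (ξ e ω) ^ 2 else 0) ∂μ)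
          + (∑ e ∈ G.edgeFinset, ∫ ω, (if ε < |ξ e ω| then (ξ e ω) ^ 2 else 0) ∂μ))
      - ((∑ e ∈ Gᶜ.edgeFinset, (∫ ω, (ξ e ω) ^ 2 ∂μ) ^ 2)
          + (∑ e ∈ G.edgeFinset, (∫ ω, (ξ e ω) ^ 2 ∂μ) ^ 2)) ≥
      (2 - (α + β))⁻¹ ^ 2 *
        ((1 - α) ^ 2 *
            (Real.exp (-(ε ^ 2) / 4) / (640 * (α * (Gᶜ.edgeFinset.card : ℝ)))
              - 1 / (Gᶜ.edgeFinset.card : ℝ))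
          + (1 - β) ^ 2 *
            (Real.exp (-(ε ^ 2) / 4) / (640 * (α * (Gᶜ.edgeFinset.card : ℝ)))
              - 1 / (G.edgeFinset.card : ℝ))) := by
  obtain ⟨hα0, hα1⟩ := hα
  obtain ⟨hβ0, hβ1⟩ := hβ
  have hm : (1:ℝ) ≤ (Gᶜ.edgeFinset.card : ℝ) := by exact_mod_cast hEc
  have hn : (1:ℝ) ≤ (G.edgeFinset.card : ℝ) := by exact_mod_cast hE
  have hm0 : (0:ℝ) < (Gᶜ.edgeFinset.card : ℝ) := by linarith
  have hn0 : (0:ℝ) < (G.edgeFinset.card : ℝ) := by linarith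
  have hpos : 0 < α * (1 - α) * (Gᶜ.edgeFinset.card : ℝ)
      + β * (1 - β) * (G.edgeFinset.card : ℝ) := by
    nlinarith [mul_pos (mul_pos hα0 (by linarith : (0:ℝ) < 1 - α)) hm0,
      mul_pos (mul_pos hβ0 (by linarith : (0:ℝ) < 1 - β)) hn0]
  have hσpos : 0 < σ := by rw [hσ]; exact Real.sqrt_pos.mpr hpos
  have hσ2 : σ^2 = α * (1 - α) * (Gᶜ.edgeFinset.card : ℝ)
      + β * (1 - β) * (G.edgeFinset.card : ℝ) := by
    rw [hσ]; exact Real.sq_sqrt hpos.le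
  have hσne : σ ≠ 0 := ne_of_gt hσpos
  have habsα : ¬ (ε < |α| / |σ|) := by
    push_neg
    rw [hε, abs_of_pos hσpos, abs_of_pos hα0, div_le_div_iff₀ hσpos (by positivity)]
    nlinarith
  have habs1α : ε < |((1:ℤ):ℝ) - α| / |σ| := by
    rw [hε, abs_of_pos hσpos, abs_of_pos (by push_cast; linarith : ((1:ℤ):ℝ) - α > 0),
      div_lt_div_iff₀ (by positivity) hσpos]
    push_cast; nlinarith
  have habsβ : ¬ (ε < |β| / |σ|) := by
    push_neg
    rw [hε, abs_of_pos hσpos, abs_of_pos hβ0, div_le_div_iff₀ hσpos (by positivity)]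
    nlinarith
  have habs1β : ε < |1 - β| / |σ| := by
    rw [hε, abs_of_pos hσpos, abs_of_pos (by linarith : (0:ℝ) < 1 - β),
      div_lt_div_iff₀ (by positivity) hσpos]
    nlinarith
  have e1 : (∑ e ∈ Gᶜ.edgeFinset, ∫ ω, (if ε < |ξ e ω| then (ξ e ω) ^ 2 else 0) ∂μ)
      = (Gᶜ.edgeFinset.card : ℝ) * (α*((1-α)/σ)^2) := by
    rw [Finset.sum_congr rfl (fun e he => ?_), Finset.sum_const, nsmul_eq_mul]
    have hfun : (fun ω => if ε < |ξ e ω| then (ξ e ω)^2 else 0)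
        = fun ω => if Y e ω = 1 then ((1-α)/σ)^2 else 0 := by
      funext ω
      rcases h01 e ω with h | h <;> rw [hξc e he ω, h] <;> simp only [abs_div] at *
      · simp [habsα, h]
      · simp only [if_pos habs1α, h, if_pos rfl]
        push_cast; ring
    rw [hfun, twoval' μ (fun ω => Y e ω = 1) (hmeas e (measurableSet_singleton 1)),
      hYα e he]
    ring
  have e2 : (∑ e ∈ G.edgeFinset, ∫ ω, (if ε < |ξ e ω| then (ξ e ω) ^ 2 else 0) ∂μ)
      = (G.edgeFinset.card : ℝ) * (β*((1-β)/σ)^2) := by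
    rw [Finset.sum_congr rfl (fun e he => ?_), Finset.sum_const, nsmul_eq_mul]
    have hfun : (fun ω => if ε < |ξ e ω| then (ξ e ω)^2 else 0)
        = fun ω => if Y e ω = 1 then 0 else ((1-β)/σ)^2 := by
      funext ω
      rcases h01 e ω with h | h <;> rw [hξe e he ω, h] <;> simp only [abs_div] at *
      · rw [if_neg (by norm_num : ¬ ((0:ℤ) = 1))]
        have habs : |((0:ℤ):ℝ) - (1-β)| = |1-β| := by
          push_cast; rw [zero_sub, abs_neg]
        rw [habs, if_pos habs1β]
        push_cast; ring
      · simp [habsβ, h]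
    rw [hfun, twoval' μ (fun ω => Y e ω = 1) (hmeas e (measurableSet_singleton 1)),
      hYβ e he]
    ring
  have e3 : (∑ e ∈ Gᶜ.edgeFinset, (∫ ω, (ξ e ω) ^ 2 ∂μ) ^ 2)
      = (Gᶜ.edgeFinset.card : ℝ) * (α*(1-α)/σ^2)^2 := by
    rw [Finset.sum_congr rfl (fun e he => ?_), Finset.sum_const, nsmul_eq_mul]
    have hfun : (fun ω => (ξ e ω)^2)
        = fun ω => if Y e ω = 1 then ((1-α)/σ)^2 else (α/σ)^2 := by
      funext ω
      rcases h01 e ω with h | h <;> rw [hξc e he ω, h] <;> push_cast <;>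
        simp [h] <;> ring
    rw [hfun, twoval' μ (fun ω => Y e ω = 1) (hmeas e (measurableSet_singleton 1)),
      hYα e he]
    have : ((1-α)/σ)^2 * α + (α/σ)^2 * (1-α) = α*(1-α)/σ^2 := by
      field_simp; ring
    rw [this]
  have e4 : (∑ e ∈ G.edgeFinset, (∫ ω, (ξ e ω) ^ 2 ∂μ) ^ 2)
      = (G.edgeFinset.card : ℝ) * (β*(1-β)/σ^2)^2 := by
    rw [Finset.sum_congr rfl (fun e he => ?_), Finset.sum_const, nsmul_eq_mul]
    have hfun : (fun ω => (ξ e ω)^2)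
        = fun ω => if Y e ω = 1 then (β/σ)^2 else ((1-β)/σ)^2 := by
      funext ω
      rcases h01 e ω with h | h <;> rw [hξe e he ω, h] <;> push_cast <;>
        simp [h] <;> ring
    rw [hfun, twoval' μ (fun ω => Y e ω = 1) (hmeas e (measurableSet_singleton 1)),
      hYβ e he]
    have : (β/σ)^2 * (1-β) + ((1-β)/σ)^2 * (1-(1-β)) = β*(1-β)/σ^2 := by
      field_simp; ring
    rw [this]
  rw [e1, e2, e3, e4]
  exact keyalg' α β _ _ σ ε _ hα0 hα2 hβ0 hβ2 hm hn hσpos hσ2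
    (by linarith [hlam1, hlam2]) hε rfl
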